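/- For all positive even integers k, the number of partitions of k with no part equal to 1 is at least the number of partitions of k/2 into parts of size at most 3, i.e. p(k) − p(k−1) ≥ #{(a,b,c) ∈ ℕ³ : a + 2b + 3c = k/2}. -/
import Mathlib

private def addOnePart (k : ℕ) (hk : 0 < k) (p : Nat.Partition (k - 1)) : Nat.Partition k where
  parts := 1 ::ₘ p.parts
  parts_pos := by
    intro j hj
    rcases Multiset.mem_cons.mp hj with h | h
    · simp [h]
    · exact p.parts_pos h
  parts_sum := by
    have := p.parts_sum
    simp only [Multiset.sum_cons, this]
    omega

private def triPart (k : ℕ) (hke : Even k) (a b c : ℕ) (h : a + 2 * b + 3 * c = k / 2) :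
    Nat.Partition k where
  parts := Multiset.replicate a 2 + Multiset.replicate b 4 + Multiset.replicate c 6
  parts_pos := by
    intro j hj
    simp only [Multiset.mem_add] at hj
    rcases hj with (h' | h') | h' <;> simp [Multiset.eq_of_mem_replicate h']
  parts_sum := by
    obtain ⟨m, hm⟩ := hke
    simp only [Multiset.sum_add, Multiset.sum_replicate, smul_eq_mul]
    omega

private lemma triPart_parts (k : ℕ) (hke : Even k) (a b c : ℕ)
    (h : a + 2 * b + 3 * c = k / 2) :
    (triPart k hke a b c h).parts =
      Multiset.replicate a 2 + Multiset.replicate b 4 + Multiset.replicate c 6 := rfl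

/-- For all positive even integers `k`, the number of partitions of `k` with no part equal
to `1`, which is `p(k) − p(k−1)`, is at least the number of triples `(a,b,c) ∈ ℕ³` with
`a + 2b + 3c = k/2` (the number of partitions of `k/2` into parts of size at most 3). -/
theorem ground_set_card_ge_dim (k : ℕ) (hk : 0 < k) (hke : Even k) :
    Fintype.card (Nat.Partition k) - Fintype.card (Nat.Partition (k - 1)) ≥
      ((Finset.range (k + 1) ×ˢ Finset.range (k + 1) ×ˢ Finset.range (k + 1)).filter
        (fun t => t.1 + 2 * t.2.1 + 3 * t.2.2 = k / 2)).card := by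
  classical
  set S := ((Finset.range (k + 1) ×ˢ Finset.range (k + 1) ×ˢ Finset.range (k + 1)).filter
      (fun t => t.1 + 2 * t.2.1 + 3 * t.2.2 = k / 2)) with hS
  have hmem : ∀ t : S, (t : ℕ × ℕ × ℕ).1 + 2 * (t : ℕ × ℕ × ℕ).2.1 +
      3 * (t : ℕ × ℕ × ℕ).2.2 = k / 2 := by
    intro t
    exact (Finset.mem_filter.mp t.2).2
  let h : Nat.Partition (k - 1) ⊕ S → Nat.Partition k :=
    Sum.elim (addOnePart k hk)
      (fun t => triPart k hke (t : ℕ × ℕ × ℕ).1 (t : ℕ × ℕ × ℕ).2.1 (t : ℕ × ℕ × ℕ).2.2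
        (hmem t))
  have hone : ∀ (p : Nat.Partition (k - 1)), (1 : ℕ) ∈ (addOnePart k hk p).parts := by
    intro p; exact Multiset.mem_cons_self _ _
  have hnone : ∀ (t : S), (1 : ℕ) ∉
      (triPart k hke (t : ℕ × ℕ × ℕ).1 (t : ℕ × ℕ × ℕ).2.1 (t : ℕ × ℕ × ℕ).2.2
        (hmem t)).parts := by
    intro t
    rw [triPart_parts]
    simp [Multiset.mem_replicate]
  have hinj : Function.Injective h := by
    rintro (p | t) (q | s) hxy
    · have := congrArg Nat.Partition.parts hxy
      simp only [h, Sum.elim_inl, addOnePart] at this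
      have : p.parts = q.parts := (Multiset.cons_inj_right _).mp this
      cases p; cases q
      simp_all
    · exact absurd (congrArg Nat.Partition.parts hxy ▸ hone p) (hnone s)
    · exact absurd ((congrArg Nat.Partition.parts hxy).symm ▸ hone q) (hnone t)
    · have hparts := congrArg Nat.Partition.parts hxy
      simp only [h, Sum.elim_inr, triPart_parts] at hparts
      have h2 := congrArg (Multiset.count 2) hparts
      have h4 := congrArg (Multiset.count 4) hparts
      have h6 := congrArg (Multiset.count 6) hparts
      simp only [Multiset.count_add, Multiset.count_replicate] at h2 h4 h6
      norm_num at h2 h4 h6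
      congr 1
      exact Subtype.ext (Prod.ext h2 (Prod.ext h4 h6))
  have hcard := Fintype.card_le_of_injective h hinj
  rw [Fintype.card_sum, Fintype.card_coe] at hcard
  omega
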